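/- For every integer m ≥ 1, there exists a polynomial Q ∈ ℤ[q] such that (1 + q) · Q = [F_{m+1}]_q · [F_{m+2}]_q · [F_{m+3}]_q (so Q equals the q-Fibonomial coefficient binom_F(m+3, 3)_q), and Q is symmetric and unimodal. -/

import Mathlib

open Polynomial

/-- The q-analog `[n]_q = 1 + q + ⋯ + q^(n-1)` as a polynomial in `ℤ[q]`. -/
noncomputable def qAnalog (n : ℕ) : Polynomial ℤ :=
  ∑ i ∈ Finset.range n, X ^ i

/-- The q-analog `[n]_{q^r} = 1 + q^r + ⋯ + q^(r(n-1))` as a polynomial in `ℤ[q]`. -/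
noncomputable def qAnalogPow (n r : ℕ) : Polynomial ℤ :=
  ∑ i ∈ Finset.range n, X ^ (r * i)

/-- A polynomial of degree `d` is symmetric if `c_k = c_{d-k}` for all `0 ≤ k ≤ d`. -/
def IsSymmPoly (P : Polynomial ℤ) : Prop :=
  ∀ k ≤ P.natDegree, P.coeff k = P.coeff (P.natDegree - k)

/-- A polynomial is unimodal if its coefficient sequence increases up to some
index `M` and decreases afterwards. -/
def IsUnimodalPoly (P : Polynomial ℤ) : Prop :=
  ∃ M : ℕ, (∀ k, k < M → P.coeff k ≤ P.coeff (k + 1)) ∧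
    (∀ k, M ≤ k → P.coeff (k + 1) ≤ P.coeff k)

/-- Trapezoid: coefficients of `[a]_q [b]_q`, extended to `ℤ`. -/
def Useq (a b : ℕ) (s : ℤ) : ℤ :=
  max 0 (min (min (s + 1) ((a : ℤ) + b - 1 - s)) (min (a : ℤ) b))

/-- Coefficients of `[a]_q [b]_q [k]_{q²}`, extended to `ℤ`. -/
def Nfun (a b k : ℕ) (t : ℤ) : ℤ :=
  ∑ l ∈ Finset.range k, Useq a b (t - 2 * l)

lemma Useq_nonneg (a b : ℕ) (s : ℤ) : 0 ≤ Useq a b s := le_max_left _ _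

lemma Useq_symm (a b : ℕ) (s : ℤ) : Useq a b ((a : ℤ) + b - 2 - s) = Useq a b s := by
  unfold Useq; omega

lemma Useq_eq_zero_of_neg (a b : ℕ) (s : ℤ) (h : s < 0) : Useq a b s = 0 := by
  unfold Useq; omega

lemma Useq_eq_zero_of_gt (a b : ℕ) (s : ℤ) (h : (a : ℤ) + b - 2 < s) : Useq a b s = 0 := by
  unfold Useq; omega

lemma Useq_delta (a b : ℕ) (s : ℤ) :
    Useq a b s - Useq a b (s - 1)
      = (if 0 ≤ s ∧ s ≤ min (a : ℤ) b - 1 then (1 : ℤ) else 0)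
        - (if max (a : ℤ) b ≤ s ∧ s ≤ min (a : ℤ) b + max (a : ℤ) b - 1 then (1 : ℤ) else 0) := by
  unfold Useq; split_ifs <;> omega

lemma card_filter_range (n : ℕ) (lo hi : ℤ) :
    ((((Finset.range n).filter (fun i : ℕ => lo ≤ (i : ℤ) ∧ (i : ℤ) ≤ hi)).card : ℤ))
      = max 0 (min hi ((n : ℤ) - 1) - max lo 0 + 1) := by
  induction n with
  | zero => simp
  | succ n ih =>
    rw [Finset.range_add_one, Finset.filter_insert]
    split_ifs with h
    · rw [Finset.card_insert_of_notMem (by simp)]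
      push_cast at ih ⊢
      omega
    · push_cast at ih ⊢
      omega

lemma card_filter_range2 (n : ℕ) (lo hi : ℤ) :
    ((((Finset.range n).filter (fun l : ℕ => lo ≤ 2 * (l : ℤ) ∧ 2 * (l : ℤ) ≤ hi)).card : ℤ))
      = max 0 (min (hi / 2) ((n : ℤ) - 1) - max ((lo + 1) / 2) 0 + 1) := by
  induction n with
  | zero => simp
  | succ n ih =>
    rw [Finset.range_add_one, Finset.filter_insert]
    split_ifs with h
    · rw [Finset.card_insert_of_notMem (by simp)]
      push_cast at ih ⊢
      omega
    · push_cast at ih ⊢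
      omega

lemma coeff_qAnalog (n j : ℕ) : (qAnalog n).coeff j = if j < n then 1 else 0 := by
  unfold qAnalog
  rw [Polynomial.finset_sum_coeff]
  simp only [Polynomial.coeff_X_pow]
  rw [Finset.sum_ite_eq (Finset.range n) j (fun _ => (1 : ℤ))]
  simp [Finset.mem_range]

lemma coeff_qq (a b : ℕ) (ha : 1 ≤ a) (hb : 1 ≤ b) (n : ℕ) :
    (qAnalog a * qAnalog b).coeff n = Useq a b n := by
  have step1 : (qAnalog a * qAnalog b).coeff n
      = ∑ i ∈ Finset.range a, ((qAnalog b) * X ^ i).coeff n := by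
    rw [show qAnalog a * qAnalog b = ∑ i ∈ Finset.range a, (qAnalog b) * X ^ i by
      unfold qAnalog; rw [Finset.sum_mul]; exact Finset.sum_congr rfl fun i _ => mul_comm _ _]
    rw [Polynomial.finset_sum_coeff]
  rw [step1]
  have step2 : ∀ i ∈ Finset.range a, ((qAnalog b) * X ^ i).coeff n
      = if (n : ℤ) + 1 - b ≤ (i : ℤ) ∧ (i : ℤ) ≤ n then (1 : ℤ) else 0 := by
    intro i _
    rw [Polynomial.coeff_mul_X_pow']
    by_cases h1 : i ≤ n
    · rw [if_pos h1, coeff_qAnalog]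
      split_ifs <;> omega
    · rw [if_neg h1]
      split_ifs <;> omega
  rw [Finset.sum_congr rfl step2, Finset.sum_boole, card_filter_range]
  unfold Useq; omega

lemma coeff_Q (a b k : ℕ) (ha : 1 ≤ a) (hb : 1 ≤ b) (n : ℕ) :
    (qAnalog a * qAnalog b * qAnalogPow k 2).coeff n = Nfun a b k n := by
  have step1 : qAnalog a * qAnalog b * qAnalogPow k 2
      = ∑ l ∈ Finset.range k, (qAnalog a * qAnalog b) * X ^ (2 * l) := by
    unfold qAnalogPow; rw [Finset.mul_sum]
  rw [step1, Polynomial.finset_sum_coeff]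
  unfold Nfun
  refine Finset.sum_congr rfl fun l _ => ?_
  rw [Polynomial.coeff_mul_X_pow']
  by_cases h1 : 2 * l ≤ n
  · rw [if_pos h1, coeff_qq a b ha hb]
    congr 1
    omega
  · rw [if_neg h1, Useq_eq_zero_of_neg]
    omega

lemma Nfun_nonneg (a b k : ℕ) (t : ℤ) : 0 ≤ Nfun a b k t :=
  Finset.sum_nonneg fun l _ => Useq_nonneg a b _

lemma Nfun_symm (a b k : ℕ) (t : ℤ) :
    Nfun a b k ((a : ℤ) + b + 2 * k - 4 - t) = Nfun a b k t := by
  unfold Nfun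
  rw [← Finset.sum_range_reflect]
  refine Finset.sum_congr rfl fun l hl => ?_
  have hl' : l < k := Finset.mem_range.mp hl
  have hcast : ((k - 1 - l : ℕ) : ℤ) = (k : ℤ) - 1 - l := by omega
  rw [hcast, show (a : ℤ) + b + 2 * k - 4 - t - 2 * ((k : ℤ) - 1 - l)
      = (a : ℤ) + b - 2 - (t - 2 * l) by ring, Useq_symm]

lemma Nfun_eq_zero_of_gt (a b k : ℕ) (t : ℤ) (h : (a : ℤ) + b + 2 * k - 4 < t) :
    Nfun a b k t = 0 := by
  unfold Nfun
  refine Finset.sum_eq_zero fun l hl => ?_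
  have hl' : l < k := Finset.mem_range.mp hl
  apply Useq_eq_zero_of_gt
  omega

lemma Nfun_mono (a b k : ℕ) (ha : 1 ≤ a) (hb : 1 ≤ b) (hk : 1 ≤ k)
    (hcond : 2 * k ≤ max a b + 1 ∨ a + b = 2 * k) (t : ℤ)
    (ht : 2 * t ≤ (a : ℤ) + b + 2 * k - 4) :
    Nfun a b k (t - 1) ≤ Nfun a b k t := by
  have key : Nfun a b k t - Nfun a b k (t - 1)
      = ((((Finset.range k).filter
            (fun l : ℕ => t - min (a : ℤ) b + 1 ≤ 2 * (l : ℤ) ∧ 2 * (l : ℤ) ≤ t)).card : ℤ))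
        - ((((Finset.range k).filter
            (fun l : ℕ => t - min (a : ℤ) b - max (a : ℤ) b + 1 ≤ 2 * (l : ℤ) ∧
              2 * (l : ℤ) ≤ t - max (a : ℤ) b)).card : ℤ)) := by
    unfold Nfun
    rw [← Finset.sum_sub_distrib]
    rw [show (∑ l ∈ Finset.range k, (Useq a b (t - 2 * l) - Useq a b (t - 1 - 2 * l)))
        = ∑ l ∈ Finset.range k,
            ((if t - min (a : ℤ) b + 1 ≤ 2 * (l : ℤ) ∧ 2 * (l : ℤ) ≤ t then (1 : ℤ) else 0)
              - (if t - min (a : ℤ) b - max (a : ℤ) b + 1 ≤ 2 * (l : ℤ) ∧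
                  2 * (l : ℤ) ≤ t - max (a : ℤ) b then (1 : ℤ) else 0)) from
      Finset.sum_congr rfl fun l _ => by
        rw [show t - 1 - 2 * (l : ℤ) = (t - 2 * l) - 1 by ring, Useq_delta]
        split_ifs <;> omega]
    rw [Finset.sum_sub_distrib, Finset.sum_boole, Finset.sum_boole]
  have c1 := card_filter_range2 k (t - min (a : ℤ) b + 1) t
  have c2 := card_filter_range2 k (t - min (a : ℤ) b - max (a : ℤ) b + 1) (t - max (a : ℤ) b)
  rw [c1, c2] at key
  have hab : (min (a : ℤ) b) = (min a b : ℕ) ∧ (max (a : ℤ) b) = (max a b : ℕ) := by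
    constructor <;> omega
  omega

lemma one_add_X_mul_qAnalogPow (k : ℕ) :
    (1 + X) * qAnalogPow k 2 = qAnalog (2 * k) := by
  induction k with
  | zero => simp [qAnalog, qAnalogPow]
  | succ k ih =>
    have e : qAnalog (2 * (k + 1)) = qAnalog (2 * k) + X ^ (2 * k) + X ^ (2 * k + 1) := by
      unfold qAnalog
      rw [show 2 * (k + 1) = 2 * k + 1 + 1 by ring, Finset.sum_range_succ,
        Finset.sum_range_succ]
    rw [qAnalogPow, Finset.sum_range_succ, ← qAnalogPow, mul_add, ih, e]
    ring

lemma master (a b k : ℕ) (ha : 1 ≤ a) (hb : 1 ≤ b) (hk : 1 ≤ k)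
    (hcond : 2 * k ≤ max a b + 1 ∨ a + b = 2 * k) :
    IsSymmPoly (qAnalog a * qAnalog b * qAnalogPow k 2) ∧
      IsUnimodalPoly (qAnalog a * qAnalog b * qAnalogPow k 2) := by
  set Q := qAnalog a * qAnalog b * qAnalogPow k 2 with hQ
  set D : ℕ := a + b + 2 * k - 4 with hD
  have hDcast : (D : ℤ) = (a : ℤ) + b + 2 * k - 4 := by omega
  have hcoeff : ∀ n : ℕ, Q.coeff n = Nfun a b k n := coeff_Q a b k ha hb
  have hdeg : Q.natDegree = D := by
    have hub : Q.natDegree ≤ D := by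
      rw [Polynomial.natDegree_le_iff_coeff_eq_zero]
      intro N hN
      rw [hcoeff, Nfun_eq_zero_of_gt]
      omega
    have hne : Q.coeff D ≠ 0 := by
      rw [hcoeff]
      have h1 : (1 : ℤ) ≤ Useq a b ((D : ℤ) - 2 * ((k - 1 : ℕ) : ℤ)) := by
        unfold Useq; omega
      have h2 : Useq a b ((D : ℤ) - 2 * ((k - 1 : ℕ) : ℤ)) ≤ Nfun a b k D := by
        unfold Nfun
        exact Finset.single_le_sum (fun l _ => Useq_nonneg a b _)
          (Finset.mem_range.mpr (by omega))
      omega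
    exact le_antisymm hub (Polynomial.le_natDegree_of_ne_zero hne)
  constructor
  · intro n hn
    rw [hdeg] at hn
    simp only [hdeg]
    rw [hcoeff, hcoeff]
    have : ((D - n : ℕ) : ℤ) = (a : ℤ) + b + 2 * k - 4 - n := by omega
    rw [this, Nfun_symm]
  · refine ⟨D / 2, fun n hn => ?_, fun n hn => ?_⟩
    · rw [hcoeff, hcoeff]
      have := Nfun_mono a b k ha hb hk hcond ((n : ℤ) + 1) (by omega)
      simpa using this
    · rw [hcoeff, hcoeff]
      push_cast
      by_cases hc : (D : ℤ) ≤ 2 * n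
      · have h1 : Nfun a b k ((n : ℤ) + 1)
            = Nfun a b k ((a : ℤ) + b + 2 * k - 4 - ((n : ℤ) + 1)) := by
          rw [Nfun_symm]
        have h2 := Nfun_mono a b k ha hb hk hcond ((a : ℤ) + b + 2 * k - 4 - (n : ℤ))
          (by omega)
        have h3 : Nfun a b k ((a : ℤ) + b + 2 * k - 4 - (n : ℤ)) = Nfun a b k n :=
          Nfun_symm a b k n
        have harg : (a : ℤ) + b + 2 * k - 4 - ((n : ℤ) + 1)
            = ((a : ℤ) + b + 2 * k - 4 - (n : ℤ)) - 1 := by ring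
        rw [h1, harg]
        omega
      · have hdodd : 2 * (n : ℤ) = (D : ℤ) - 1 := by omega
        have h1 : Nfun a b k ((n : ℤ) + 1)
            = Nfun a b k ((a : ℤ) + b + 2 * k - 4 - ((n : ℤ) + 1)) := by
          rw [Nfun_symm]
        have harg : (a : ℤ) + b + 2 * k - 4 - ((n : ℤ) + 1) = (n : ℤ) := by omega
        rw [h1, harg]

lemma fib_mod2 : ∀ j : ℕ, Nat.fib (3 * j) % 2 = 0 ∧ Nat.fib (3 * j + 1) % 2 = 1 ∧
    Nat.fib (3 * j + 2) % 2 = 1 := by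
  intro j
  induction j with
  | zero => decide
  | succ j ih =>
    obtain ⟨h0, h1, h2⟩ := ih
    have a1 := Nat.fib_add_two (n := 3 * j + 1)
    have a2 := Nat.fib_add_two (n := 3 * j + 2)
    have a3 := Nat.fib_add_two (n := 3 * j + 3)
    rw [show 3 * j + 1 + 2 = 3 * j + 3 by omega, show 3 * j + 1 + 1 = 3 * j + 2 by omega] at a1
    rw [show 3 * j + 2 + 2 = 3 * j + 4 by omega, show 3 * j + 2 + 1 = 3 * j + 3 by omega] at a2
    rw [show 3 * j + 3 + 2 = 3 * j + 5 by omega, show 3 * j + 3 + 1 = 3 * j + 4 by omega] at a3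
    rw [show 3 * (j + 1) = 3 * j + 3 by omega, show 3 * j + 3 + 1 = 3 * j + 4 by omega,
      show 3 * j + 3 + 2 = 3 * j + 5 by omega]
    omega

lemma fib_even_of_dvd (n : ℕ) (h : 3 ∣ n) : Nat.fib n % 2 = 0 := by
  obtain ⟨j, rfl⟩ := h
  exact (fib_mod2 j).1

theorem qFibonomial_three_symm_unimodal (m : ℕ) (hm : 1 ≤ m) :
    ∃ Q : Polynomial ℤ,
      (1 + X) * Q
        = qAnalog (Nat.fib (m + 1)) * qAnalog (Nat.fib (m + 2)) *
            qAnalog (Nat.fib (m + 3)) ∧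
      IsSymmPoly Q ∧ IsUnimodalPoly Q := by
  have hf1 : 1 ≤ Nat.fib (m + 1) := Nat.fib_pos.mpr (by omega)
  have hf2 : 1 ≤ Nat.fib (m + 2) := Nat.fib_pos.mpr (by omega)
  have hf3 : 1 ≤ Nat.fib (m + 3) := Nat.fib_pos.mpr (by omega)
  have hmono12 : Nat.fib (m + 1) ≤ Nat.fib (m + 2) := Nat.fib_mono (by omega)
  have hmono23 : Nat.fib (m + 2) ≤ Nat.fib (m + 3) := Nat.fib_mono (by omega)
  have hadd : Nat.fib (m + 3) = Nat.fib (m + 1) + Nat.fib (m + 2) :=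
    Nat.fib_add_two (n := m + 1)
  rcases (show m % 3 = 0 ∨ m % 3 = 1 ∨ m % 3 = 2 by omega) with h | h | h
  · -- fib (m+3) even
    have heven : Nat.fib (m + 3) % 2 = 0 := fib_even_of_dvd _ (by omega)
    set k := Nat.fib (m + 3) / 2 with hk
    have h2k : 2 * k = Nat.fib (m + 3) := by omega
    have hk1 : 1 ≤ k := by
      have : 2 ≤ Nat.fib (m + 3) := by
        have := Nat.fib_mono (show 3 ≤ m + 3 by omega)
        simpa [Nat.fib] using this
      omega
    obtain ⟨hsym, huni⟩ := master (Nat.fib (m + 1)) (Nat.fib (m + 2)) k hf1 hf2 hk1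
      (Or.inr (by omega))
    refine ⟨qAnalog (Nat.fib (m + 1)) * qAnalog (Nat.fib (m + 2)) * qAnalogPow k 2,
      ?_, hsym, huni⟩
    rw [show (1 + X) * (qAnalog (Nat.fib (m + 1)) * qAnalog (Nat.fib (m + 2)) * qAnalogPow k 2)
        = qAnalog (Nat.fib (m + 1)) * qAnalog (Nat.fib (m + 2)) *
            ((1 + X) * qAnalogPow k 2) by ring,
      one_add_X_mul_qAnalogPow, h2k]
  · -- fib (m+2) even
    have heven : Nat.fib (m + 2) % 2 = 0 := fib_even_of_dvd _ (by omega)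
    set k := Nat.fib (m + 2) / 2 with hk
    have h2k : 2 * k = Nat.fib (m + 2) := by omega
    have hk1 : 1 ≤ k := by
      have : 2 ≤ Nat.fib (m + 2) := by
        have := Nat.fib_mono (show 3 ≤ m + 2 by omega)
        simpa [Nat.fib] using this
      omega
    obtain ⟨hsym, huni⟩ := master (Nat.fib (m + 1)) (Nat.fib (m + 3)) k hf1 hf3 hk1
      (Or.inl (by omega))
    refine ⟨qAnalog (Nat.fib (m + 1)) * qAnalog (Nat.fib (m + 3)) * qAnalogPow k 2,
      ?_, hsym, huni⟩
    rw [show (1 + X) * (qAnalog (Nat.fib (m + 1)) * qAnalog (Nat.fib (m + 3)) * qAnalogPow k 2)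
        = qAnalog (Nat.fib (m + 1)) * qAnalog (Nat.fib (m + 3)) *
            ((1 + X) * qAnalogPow k 2) by ring,
      one_add_X_mul_qAnalogPow, h2k]
    ring
  · -- fib (m+1) even
    have heven : Nat.fib (m + 1) % 2 = 0 := fib_even_of_dvd _ (by omega)
    set k := Nat.fib (m + 1) / 2 with hk
    have h2k : 2 * k = Nat.fib (m + 1) := by omega
    have hk1 : 1 ≤ k := by
      have : 2 ≤ Nat.fib (m + 1) := by
        have := Nat.fib_mono (show 3 ≤ m + 1 by omega)
        simpa [Nat.fib] using this
      omega
    obtain ⟨hsym, huni⟩ := master (Nat.fib (m + 2)) (Nat.fib (m + 3)) k hf2 hf3 hk1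
      (Or.inl (by omega))
    refine ⟨qAnalog (Nat.fib (m + 2)) * qAnalog (Nat.fib (m + 3)) * qAnalogPow k 2,
      ?_, hsym, huni⟩
    rw [show (1 + X) * (qAnalog (Nat.fib (m + 2)) * qAnalog (Nat.fib (m + 3)) * qAnalogPow k 2)
        = qAnalog (Nat.fib (m + 2)) * qAnalog (Nat.fib (m + 3)) *
            ((1 + X) * qAnalogPow k 2) by ring,
      one_add_X_mul_qAnalogPow, h2k]
    ring
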